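/- Over the set S = {ỹ probability vector on K classes : ‖ỹ − e_k‖₁ ≤ ε}, which is compact and convex, the linear function ỹ ↦ ∑_j ỹ[j] c_j attains its maximum at an extreme point; in particular the maximum value is max over j of [(1 − ε/2)c_k + (ε/2)c_j] when ε ≤ 2, assuming c_j ≥ 0 for all j and c_k ≤ c_j for the maximizing computation. Formally: sup_{ỹ ∈ S} ∑_j ỹ[j] c_j = (1 − ε/2)c_k + (ε/2)·max_{j} c_j, provided max_j c_j ≥ c_k. -/

import Mathlib

/-- The linear function attains its maximum over the truncated simplex at the stated value. -/
theorem stmt_11 (K : ℕ) (hK : 2 ≤ K) (c : Fin K → ℝ) (hc : ∀ j, 0 ≤ c j)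
    (k : Fin K) (ε : ℝ) (hε : ε ∈ Set.Icc (0:ℝ) 2)
    (hck : c k ≤ Finset.univ.sup' ⟨k, Finset.mem_univ k⟩ c) :
    IsGreatest
      {z | ∃ y : Fin K → ℝ, (∀ j, 0 ≤ y j) ∧ (∑ j, y j = 1) ∧
        (∑ j, |y j - (if j = k then (1:ℝ) else 0)| ≤ ε) ∧ z = ∑ j, y j * c j}
      ((1 - ε/2) * c k + (ε/2) * Finset.univ.sup' ⟨k, Finset.mem_univ k⟩ c) := by
  obtain ⟨hε0, hε2⟩ := hε
  set M := Finset.univ.sup' ⟨k, Finset.mem_univ k⟩ c with hM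
  obtain ⟨j₀, -, hj₀⟩ := Finset.exists_mem_eq_sup' ⟨k, Finset.mem_univ k⟩ c
  have hMle : ∀ j, c j ≤ M := fun j => Finset.le_sup' c (Finset.mem_univ j)
  constructor
  · -- membership
    refine ⟨fun j => (1 - ε/2) * (if j = k then 1 else 0)
        + (ε/2) * (if j = j₀ then 1 else 0), ?_, ?_, ?_, ?_⟩
    · intro j
      have h1 : (0:ℝ) ≤ 1 - ε/2 := by linarith
      positivity
    · rw [Finset.sum_add_distrib, ← Finset.mul_sum, ← Finset.mul_sum]
      simp [Finset.sum_ite_eq']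
    · have key : ∀ j : Fin K,
          |(1 - ε/2) * (if j = k then (1:ℝ) else 0) + (ε/2) * (if j = j₀ then 1 else 0)
            - (if j = k then (1:ℝ) else 0)|
          ≤ (ε/2) * ((if j = k then (1:ℝ) else 0) + (if j = j₀ then 1 else 0)) := by
        intro j
        by_cases h1 : j = k <;> by_cases h2 : j = j₀
        · rw [if_pos h1, if_pos h2,
            show (1 - ε/2) * 1 + ε/2 * 1 - 1 = (0:ℝ) by ring, abs_zero]
          nlinarith
        · rw [if_pos h1, if_neg h2,
            show (1 - ε/2) * 1 + ε/2 * 0 - 1 = -(ε/2) by ring, abs_neg,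
            abs_of_nonneg (by linarith)]
          linarith
        · rw [if_neg h1, if_pos h2,
            show (1 - ε/2) * 0 + ε/2 * 1 - 0 = ε/2 by ring,
            abs_of_nonneg (by linarith)]
          linarith
        · rw [if_neg h1, if_neg h2,
            show (1 - ε/2) * 0 + ε/2 * 0 - 0 = (0:ℝ) by ring, abs_zero]
          linarith
      calc ∑ j, |(1 - ε/2) * (if j = k then (1:ℝ) else 0) + (ε/2) * (if j = j₀ then 1 else 0)
            - (if j = k then (1:ℝ) else 0)|
          ≤ ∑ j, (ε/2) * ((if j = k then (1:ℝ) else 0) + (if j = j₀ then 1 else 0)) :=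
            Finset.sum_le_sum (fun j _ => key j)
        _ ≤ ε := by
            rw [← Finset.mul_sum, Finset.sum_add_distrib]
            simp [Finset.sum_ite_eq']
            linarith
    · rw [Finset.sum_congr rfl (fun j _ => by ring :
        ∀ j ∈ Finset.univ, ((1 - ε/2) * (if j = k then (1:ℝ) else 0)
          + (ε/2) * (if j = j₀ then 1 else 0)) * c j
        = (1 - ε/2) * ((if j = k then (1:ℝ) else 0) * c j)
          + (ε/2) * ((if j = j₀ then (1:ℝ) else 0) * c j))]
      rw [Finset.sum_add_distrib, ← Finset.mul_sum, ← Finset.mul_sum]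
      simp [ite_mul, Finset.sum_ite_eq', ← hj₀]
      exact Or.inl hM
  · -- upper bound
    rintro z ⟨y, hy0, hy1, hyε, rfl⟩
    have hmem : k ∈ Finset.univ := Finset.mem_univ k
    have hyk1 : y k ≤ 1 := by
      rw [← hy1]
      exact Finset.single_le_sum (fun j _ => hy0 j) hmem
    have hsumer : ∑ j ∈ Finset.univ.erase k, y j = 1 - y k := by
      have := Finset.add_sum_erase Finset.univ y hmem
      linarith
    have habs : ∑ j, |y j - (if j = k then (1:ℝ) else 0)| = 2 - 2 * y k := by
      rw [← Finset.add_sum_erase Finset.univ _ hmem]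
      have h1 : |y k - (if k = k then (1:ℝ) else 0)| = 1 - y k := by
        simp [abs_of_nonpos (by linarith : y k - 1 ≤ 0)]
      have h2 : ∑ j ∈ Finset.univ.erase k, |y j - (if j = k then (1:ℝ) else 0)|
          = ∑ j ∈ Finset.univ.erase k, y j := by
        refine Finset.sum_congr rfl fun j hj => ?_
        have : j ≠ k := Finset.ne_of_mem_erase hj
        simp [this, abs_of_nonneg (hy0 j)]
      rw [h1, h2, hsumer]; ring
    have hykε : 1 - y k ≤ ε / 2 := by rw [habs] at hyε; linarith
    have hsum : ∑ j, y j * c j ≤ y k * c k + (1 - y k) * M := by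
      rw [← Finset.add_sum_erase Finset.univ _ hmem, ← hsumer, Finset.sum_mul]
      gcongr with j hj
      · exact hy0 j
      · exact hMle j
    have hMk : c k ≤ M := hck
    nlinarith [hy0 k]
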